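/- arXiv:1406.6603 — 2 statements merged into one kernel-verified Lean document; each statement's English description precedes it below -/
import Mathlib

section
/- Let p be a positive integer, let Ω ⊆ ℝ^p be a nonempty closed convex set, and let f : ℝ^p → ℝ be continuously differentiable. Fix parameters β, γ ∈ (0,1), 0 < α_min ≤ α_max and 0 < L_min ≤ L_max. Let (x^(k)), (z^(k)) be sequences in ℝ^p, (α_k) a sequence in [α_min, α_max], (d^(k)) a sequence of vectors in ℝ^p with L_min ≤ d^(k)_i ≤ L_max for all i, and (λ_k) a sequence in (0,1], such that: x^(0) ∈ Ω; for every k, z^(k) is the point of Ω minimizing y ↦ Σ_i (y_i − w^(k)_i)²/d^(k)_i over Ω, where w^(k)_i = x^(k)_i − α_k d^(k)_i ∂_i f(x^(k)); for every k, writing Δ^(k) = z^(k) − x^(k), the Armijo condition f(x^(k) + λ_k Δ^(k)) ≤ f(x^(k)) + β λ_k ∇f(x^(k))·Δ^(k) holds, and moreover either λ_k = 1 or f(x^(k) + (λ_k/γ) Δ^(k)) > f(x^(k)) + β (λ_k/γ) ∇f(x^(k))·Δ^(k) (i.e. λ_k is produced by backtracking with reduction factor γ); and x^(k+1) = x^(k)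 + λ_k Δ^(k). Then every accumulation point x* of the sequence (x^(k)) is a constrained stationary point, i.e. ∇f(x*)·(y − x*) ≥ 0 for all y ∈ Ω. -/
open Filter Topology Finset InnerProductSpace Real

lemma eunorm_sq {p : ℕ} (a : EuclideanSpace ℝ (Fin p)) : ‖a‖^2 = ∑ i, (a i)^2 := by
  rw [EuclideanSpace.norm_eq, Real.sq_sqrt (by positivity)]
  simp [Real.norm_eq_abs, sq_abs]

lemma eunorm_eq {p : ℕ} (a : EuclideanSpace ℝ (Fin p)) : ‖a‖ = Real.sqrt (∑ i, (a i)^2) := by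
  rw [EuclideanSpace.norm_eq]; congr 1; simp [Real.norm_eq_abs, sq_abs]

lemma coord_le {p : ℕ} (a : EuclideanSpace ℝ (Fin p)) (i : Fin p) : |a i| ≤ ‖a‖ := by
  rw [eunorm_eq, ← Real.sqrt_sq_eq_abs]
  exact Real.sqrt_le_sqrt (Finset.single_le_sum (f := fun j => (a j)^2) (fun j _ => sq_nonneg _) (mem_univ i))

lemma inner_eq_sum {p : ℕ} (u v : EuclideanSpace ℝ (Fin p)) :
    (inner ℝ u v : ℝ) = ∑ i, u i * v i := by
  simp [PiLp.inner_apply, RCLike.inner_apply, mul_comm]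

lemma grad_sum_eq {p : ℕ} (f : EuclideanSpace ℝ (Fin p) → ℝ) (x v : EuclideanSpace ℝ (Fin p)) :
    ∑ i, gradient f x i * v i = fderiv ℝ f x v := by
  rw [← inner_eq_sum]; unfold gradient; rw [toDual_symm_apply]

open Filter Topology Finset InnerProductSpace Real

lemma sgp_vi {p : ℕ} {Ω : Set (EuclideanSpace ℝ (Fin p))} (hΩconv : Convex ℝ Ω)
    {d : Fin p → ℝ} (hd : ∀ i, 0 < d i) (w : Fin p → ℝ)
    {zz : EuclideanSpace ℝ (Fin p)} (hz : zz ∈ Ω)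
    (hmin : ∀ y ∈ Ω, (∑ i, (zz i - w i)^2 / d i) ≤ (∑ i, (y i - w i)^2 / d i))
    {y : EuclideanSpace ℝ (Fin p)} (hy : y ∈ Ω) :
    0 ≤ ∑ i, (zz i - w i) * (y i - zz i) / d i := by
  set S := ∑ i, (zz i - w i) * (y i - zz i) / d i with hS
  set T := ∑ i, (y i - zz i)^2 / d i with hT
  have hT0 : 0 ≤ T := Finset.sum_nonneg fun i _ => div_nonneg (sq_nonneg _) (hd i).le
  have key : ∀ t : ℝ, 0 < t → t ≤ 1 → 0 ≤ 2 * S + t * T := by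
    intro t ht ht1
    have hmem : (zz + t • (y - zz) : EuclideanSpace ℝ (Fin p)) ∈ Ω := by
      have h := hΩconv hz hy (by linarith : (0:ℝ) ≤ 1 - t) ht.le (by ring)
      convert h using 1
      module
    have h2 := hmin _ hmem
    have hexp : (∑ i, ((zz + t • (y - zz) : EuclideanSpace ℝ (Fin p)) i - w i)^2 / d i)
        = (∑ i, (zz i - w i)^2 / d i) + (2 * t * S + t^2 * T) := by
      rw [hS, hT, Finset.mul_sum, Finset.mul_sum, ← Finset.sum_add_distrib,
        ← Finset.sum_add_distrib]
      refine Finset.sum_congr rfl fun i _ => ?_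
      have hdi := (hd i).ne'
      simp only [PiLp.add_apply, PiLp.smul_apply, PiLp.sub_apply, smul_eq_mul]
      field_simp
      ring
    rw [hexp] at h2
    nlinarith
  by_contra hSneg
  push_neg at hSneg
  have hTpos : 0 < T := by nlinarith [key 1 one_pos le_rfl]
  have htpos : 0 < min 1 (-S / T) := lt_min one_pos (div_pos (neg_pos.2 hSneg) hTpos)
  have h := key _ htpos (min_le_left _ _)
  have : min 1 (-S / T) * T ≤ -S := by
    calc min 1 (-S / T) * T ≤ (-S / T) * T :=
          mul_le_mul_of_nonneg_right (min_le_right _ _) hTpos.le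
      _ = -S := by field_simp
  linarith

lemma line_deriv {p : ℕ} {f : EuclideanSpace ℝ (Fin p) → ℝ} (hf : Differentiable ℝ f)
    (x Δ : EuclideanSpace ℝ (Fin p)) (t : ℝ) :
    HasDerivAt (fun s : ℝ => f (x + s • Δ)) (fderiv ℝ f (x + t • Δ) Δ) t := by
  have h1 : HasDerivAt (fun s : ℝ => x + s • Δ) Δ t := by
    simpa using ((hasDerivAt_id t).smul_const Δ).const_add x
  exact (hf _).hasFDerivAt.comp_hasDerivAt t h1

set_option maxHeartbeats 2000000 in
/-- Convergence of the scaled gradient projection (SGP) method: every accumulation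
point of the sequence of iterates is a constrained stationary point. -/
theorem sgp_accumulation_points_are_stationary
    (p : ℕ) (hp : 0 < p)
    (Ω : Set (EuclideanSpace ℝ (Fin p)))
    (hΩne : Ω.Nonempty) (hΩclosed : IsClosed Ω) (hΩconv : Convex ℝ Ω)
    (f : EuclideanSpace ℝ (Fin p) → ℝ) (hf : ContDiff ℝ 1 f)
    (β γ : ℝ) (hβ : β ∈ Set.Ioo (0:ℝ) 1) (hγ : γ ∈ Set.Ioo (0:ℝ) 1)
    (αmin αmax Lmin Lmax : ℝ)
    (hαmin : 0 < αmin) (hαminmax : αmin ≤ αmax)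
    (hLmin : 0 < Lmin) (hLminmax : Lmin ≤ Lmax)
    (x z : ℕ → EuclideanSpace ℝ (Fin p))
    (α : ℕ → ℝ) (d : ℕ → Fin p → ℝ) (lam : ℕ → ℝ)
    (hα : ∀ k, α k ∈ Set.Icc αmin αmax)
    (hd : ∀ k i, d k i ∈ Set.Icc Lmin Lmax)
    (hlam : ∀ k, lam k ∈ Set.Ioc (0:ℝ) 1)
    (hx0 : x 0 ∈ Ω)
    -- z^(k) is the scaled projection of x^(k) - α_k D_k ∇f(x^(k)) onto Ω
    (hzmem : ∀ k, z k ∈ Ω)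
    (hzmin : ∀ k, ∀ y ∈ Ω,
      (∑ i, (z k i - (x k i - α k * d k i * gradient f (x k) i))^2 / d k i) ≤
      (∑ i, (y i - (x k i - α k * d k i * gradient f (x k) i))^2 / d k i))
    -- Armijo sufficient decrease condition
    (hArmijo : ∀ k,
      f (x k + lam k • (z k - x k)) ≤
        f (x k) + β * lam k * ∑ i, gradient f (x k) i * (z k i - x k i))
    -- λ_k is produced by backtracking with reduction factor γ
    (hbacktrack : ∀ k, lam k = 1 ∨
      f (x k + (lam k / γ) • (z k - x k)) >
        f (x k) + β * (lam k / γ) * ∑ i, gradient f (x k) i * (z k i - x k i))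
    -- update rule
    (hupdate : ∀ k, x (k + 1) = x k + lam k • (z k - x k))
    -- x* is an accumulation point of the sequence (x^(k))
    (xstar : EuclideanSpace ℝ (Fin p))
    (hacc : MapClusterPt xstar Filter.atTop x) :
    ∀ y ∈ Ω, 0 ≤ ∑ i, gradient f xstar i * (y i - xstar i) := by
  classical
  obtain ⟨hβ0, hβ1⟩ := hβ
  obtain ⟨hγ0, hγ1⟩ := hγ
  have hLmax : (0:ℝ) < Lmax := hLmin.trans_le hLminmax
  have hαmax : (0:ℝ) < αmax := hαmin.trans_le hαminmax
  have hdiff : Differentiable ℝ f := hf.differentiable one_ne_zero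
  have hgc : Continuous fun y => gradient f y := by
    unfold gradient
    exact (LinearIsometryEquiv.continuous _).comp (hf.continuous_fderiv one_ne_zero)
  have hsub : ∀ (a b : EuclideanSpace ℝ (Fin p)) (i : Fin p), (a - b) i = a i - b i :=
    fun a b i => rfl
  -- iterates stay in Ω
  have hxΩ : ∀ k, x k ∈ Ω := by
    intro k
    induction k with
    | zero => exact hx0
    | succ k ih =>
      rw [hupdate k]
      have h := hΩconv ih (hzmem k) (by linarith [(hlam k).2] : (0:ℝ) ≤ 1 - lam k)
        (hlam k).1.le (by ring)
      convert h using 1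
      module
  set G : ℕ → ℝ := fun k => ∑ i, gradient f (x k) i * (z k i - x k i) with hGdef
  have hGeq : ∀ k, (∑ i, gradient f (x k) i * (z k i - x k i)) = G k := fun k => rfl
  have hGinner : ∀ k, G k = (inner ℝ (gradient f (x k)) (z k - x k) : ℝ) := by
    intro k
    rw [← hGeq k, inner_eq_sum]
    exact Finset.sum_congr rfl fun i _ => by rw [hsub]
  have hdpos : ∀ k i, 0 < d k i := fun k i => hLmin.trans_le (hd k i).1
  have hVI : ∀ k, ∀ y ∈ Ω, 0 ≤ ∑ i,
      (z k i - (x k i - α k * d k i * gradient f (x k) i)) * (y i - z k i) / d k i :=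
    fun k y hy => sgp_vi hΩconv (hdpos k) _ (hzmem k) (hzmin k) hy
  set Q : ℕ → ℝ := fun k => ∑ i, (z k i - x k i)^2 / d k i with hQdef
  have hQ0 : ∀ k, 0 ≤ Q k :=
    fun k => Finset.sum_nonneg fun i _ => div_nonneg (sq_nonneg _) (hdpos k i).le
  have hαG : ∀ k, α k * G k ≤ - Q k := by
    intro k
    have h := hVI k (x k) (hxΩ k)
    have heq : ∀ i : Fin p,
        (z k i - (x k i - α k * d k i * gradient f (x k) i)) * (x k i - z k i) / d k i
        = -((z k i - x k i)^2 / d k i) - α k * (gradient f (x k) i * (z k i - x k i)) := by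
      intro i
      have hdi := (hdpos k i).ne'
      field_simp
      ring
    rw [Finset.sum_congr rfl (fun i _ => heq i), Finset.sum_sub_distrib,
      Finset.sum_neg_distrib, ← Finset.mul_sum, hGeq k] at h
    have hQeq : (∑ i, (z k i - x k i)^2 / d k i) = Q k := rfl
    rw [hQeq] at h
    linarith
  have hGle0 : ∀ k, G k ≤ 0 := by
    intro k
    by_contra h
    push_neg at h
    have hα0 : 0 < α k := hαmin.trans_le (hα k).1
    nlinarith [hQ0 k, hαG k]
  have hkey1 : ∀ k, ‖z k - x k‖^2 ≤ αmax * Lmax * (-G k) := by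
    intro k
    have h1 : ‖z k - x k‖^2 ≤ Lmax * Q k := by
      rw [eunorm_sq, hQdef, Finset.mul_sum]
      refine Finset.sum_le_sum fun i _ => ?_
      rw [hsub]
      have hdi := hdpos k i
      have e : (z k i - x k i)^2 = (z k i - x k i)^2 / d k i * d k i :=
        (div_mul_cancel₀ _ hdi.ne').symm
      nlinarith [div_nonneg (sq_nonneg (z k i - x k i)) hdi.le, (hd k i).2]
    have h6 : Q k ≤ α k * (-G k) := by linarith [hαG k]
    have h7 : Lmax * Q k ≤ Lmax * (α k * (-G k)) := mul_le_mul_of_nonneg_left h6 hLmax.le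
    have h4 : α k * (-G k) ≤ αmax * (-G k) :=
      mul_le_mul_of_nonneg_right (hα k).2 (neg_nonneg.2 (hGle0 k))
    have h5 : Lmax * (α k * (-G k)) ≤ Lmax * (αmax * (-G k)) :=
      mul_le_mul_of_nonneg_left h4 hLmax.le
    calc ‖z k - x k‖^2 ≤ Lmax * Q k := h1
      _ ≤ Lmax * (α k * (-G k)) := h7
      _ ≤ Lmax * (αmax * (-G k)) := h5
      _ = αmax * Lmax * (-G k) := by ring
  -- monotonicity of f along the iterates
  have hmono : ∀ k, f (x (k+1)) ≤ f (x k) := by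
    intro k
    have h := hArmijo k
    rw [hGeq k, ← hupdate k] at h
    have hb : β * lam k * G k ≤ 0 :=
      mul_nonpos_of_nonneg_of_nonpos (mul_nonneg hβ0.le (hlam k).1.le) (hGle0 k)
    linarith
  have hfanti : Antitone fun k => f (x k) := antitone_nat_of_succ_le hmono
  -- subsequence converging to xstar
  obtain ⟨φ, hφmono, hφtend⟩ := TopologicalSpace.FirstCountableTopology.tendsto_subseq hacc
  have hfx : Tendsto (fun n => f (x (φ n))) atTop (𝓝 (f xstar)) :=
    (hf.continuous.tendsto xstar).comp hφtend
  have hflim : Tendsto (fun k => f (x k)) atTop (𝓝 (f xstar)) := by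
    rcases tendsto_of_antitone hfanti with h | ⟨L, hL⟩
    · exfalso
      have h2 : Tendsto (fun n => f (x (φ n))) atTop atBot := h.comp hφmono.tendsto_atTop
      exact not_tendsto_nhds_of_tendsto_atBot h2 _ hfx
    · have hLeq : L = f xstar :=
        tendsto_nhds_unique (hL.comp hφmono.tendsto_atTop) hfx
      rwa [hLeq] at hL
  have hd0 : Tendsto (fun k => f (x (k+1)) - f (x k)) atTop (𝓝 0) := by
    have h := (hflim.comp (tendsto_add_atTop_nat 1)).sub hflim
    simpa using h
  have hsqz : Tendsto (fun k => β * (lam k * G k)) atTop (𝓝 0) := by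
    apply tendsto_of_tendsto_of_tendsto_of_le_of_le hd0 tendsto_const_nhds
    · intro k
      have h := hArmijo k
      rw [hGeq k, ← hupdate k] at h
      show f (x (k+1)) - f (x k) ≤ β * (lam k * G k)
      nlinarith
    · intro k
      show β * (lam k * G k) ≤ 0
      exact mul_nonpos_of_nonneg_of_nonpos hβ0.le
        (mul_nonpos_of_nonneg_of_nonpos (hlam k).1.le (hGle0 k))
  have hlamG0 : Tendsto (fun k => lam k * G k) atTop (𝓝 0) := by
    have h2 : (fun k => lam k * G k) = fun k => (1/β) * (β * (lam k * G k)) := by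
      funext k; field_simp
    rw [h2]
    simpa using hsqz.const_mul (1/β)
  -- boundedness of the iterates and auxiliary vectors along the subsequence
  obtain ⟨y0, hy0⟩ := hΩne
  set Dv : ℕ → EuclideanSpace ℝ (Fin p) :=
    fun k => (WithLp.equiv 2 (Fin p → ℝ)).symm (fun i => d k i * gradient f (x k) i) with hDv
  have hDvc : ∀ k i, Dv k i = d k i * gradient f (x k) i := fun k i => rfl
  set wv : ℕ → EuclideanSpace ℝ (Fin p) := fun k => x k - α k • Dv k with hwv
  have hwvc : ∀ k i, wv k i = x k i - α k * (d k i * gradient f (x k) i) := by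
    intro k i
    rw [hwv]
    simp [hsub, hDvc, PiLp.smul_apply, smul_eq_mul]
  have hzb : ∀ k, ‖z k - wv k‖ ≤ Real.sqrt (Lmax / Lmin) * ‖y0 - wv k‖ := by
    intro k
    have h := hzmin k y0 hy0
    have h1 : ‖z k - wv k‖^2 / Lmax ≤
        ∑ i, (z k i - (x k i - α k * d k i * gradient f (x k) i))^2 / d k i := by
      rw [eunorm_sq, Finset.sum_div]
      refine Finset.sum_le_sum fun i _ => ?_
      have hcoord : (z k - wv k) i = z k i - (x k i - α k * d k i * gradient f (x k) i) := by
        rw [hsub, hwvc]; ring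
      rw [hcoord]
      exact div_le_div_of_nonneg_left (sq_nonneg _) (hdpos k i) (hd k i).2
    have h2 : ∑ i, (y0 i - (x k i - α k * d k i * gradient f (x k) i))^2 / d k i ≤
        ‖y0 - wv k‖^2 / Lmin := by
      rw [eunorm_sq, Finset.sum_div]
      refine Finset.sum_le_sum fun i _ => ?_
      have hcoord : (y0 - wv k) i = y0 i - (x k i - α k * d k i * gradient f (x k) i) := by
        rw [hsub, hwvc]; ring
      rw [hcoord]
      exact div_le_div_of_nonneg_left (sq_nonneg _) hLmin (hd k i).1
    have h4 : ‖z k - wv k‖^2 / Lmax ≤ ‖y0 - wv k‖^2 / Lmin := le_trans h1 (le_trans h h2)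
    rw [div_le_div_iff₀ hLmax hLmin] at h4
    have h3 : ‖z k - wv k‖^2 ≤ (Lmax/Lmin) * ‖y0 - wv k‖^2 := by
      rw [div_mul_eq_mul_div, le_div_iff₀ hLmin]
      linarith
    have h5 : ‖z k - wv k‖ ≤ Real.sqrt ((Lmax/Lmin) * ‖y0 - wv k‖^2) := by
      rw [← Real.sqrt_sq (norm_nonneg (z k - wv k))]
      exact Real.sqrt_le_sqrt h3
    rwa [Real.sqrt_mul (by positivity) , Real.sqrt_sq (norm_nonneg _)] at h5
  have hwnorm : ∀ k, ‖wv k‖ ≤ ‖x k‖ + αmax * (Lmax * ‖gradient f (x k)‖) := by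
    intro k
    have h1 : ‖wv k‖ ≤ ‖x k‖ + ‖α k • Dv k‖ := norm_sub_le _ _
    rw [norm_smul, Real.norm_eq_abs] at h1
    have hD : ‖Dv k‖ ≤ Lmax * ‖gradient f (x k)‖ := by
      have h2 : ‖Dv k‖^2 ≤ Lmax^2 * ‖gradient f (x k)‖^2 := by
        rw [eunorm_sq, eunorm_sq, Finset.mul_sum]
        refine Finset.sum_le_sum fun i _ => ?_
        rw [hDvc, mul_pow]
        exact mul_le_mul_of_nonneg_right
          (by nlinarith [(hd k i).1, (hd k i).2, hLmin] : (d k i)^2 ≤ Lmax^2) (sq_nonneg _)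
      have h3 := Real.sqrt_le_sqrt h2
      rwa [Real.sqrt_sq (norm_nonneg _), Real.sqrt_mul (sq_nonneg Lmax),
        Real.sqrt_sq hLmax.le, Real.sqrt_sq (norm_nonneg _)] at h3
    have hαk : |α k| ≤ αmax := abs_le.2 ⟨by linarith [(hα k).1], (hα k).2⟩
    have h6 : |α k| * ‖Dv k‖ ≤ αmax * (Lmax * ‖gradient f (x k)‖) :=
      mul_le_mul hαk hD (norm_nonneg _) hαmax.le
    linarith
  -- bounds along φ
  have hgφ : Tendsto (fun n => gradient f (x (φ n))) atTop (𝓝 (gradient f xstar)) := by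
    have := (hgc.tendsto xstar).comp hφtend
    simpa [Function.comp_def] using this
  obtain ⟨Cx, hCx⟩ : ∃ C, ∀ n, ‖x (φ n)‖ ≤ C := by
    obtain ⟨C, hC⟩ := hφtend.norm.bddAbove_range
    exact ⟨C, fun n => hC ⟨n, rfl⟩⟩
  obtain ⟨Cg, hCg⟩ : ∃ C, ∀ n, ‖gradient f (x (φ n))‖ ≤ C := by
    obtain ⟨C, hC⟩ := hgφ.norm.bddAbove_range
    exact ⟨C, fun n => hC ⟨n, rfl⟩⟩
  set Cw : ℝ := Cx + αmax * (Lmax * Cg) with hCwdef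
  have hw2 : ∀ n, ‖wv (φ n)‖ ≤ Cw := by
    intro n
    refine le_trans (hwnorm (φ n)) ?_
    have h1 := hCx n
    have h2 := hCg n
    have : αmax * (Lmax * ‖gradient f (x (φ n))‖) ≤ αmax * (Lmax * Cg) :=
      mul_le_mul_of_nonneg_left (mul_le_mul_of_nonneg_left h2 hLmax.le) hαmax.le
    rw [hCwdef]; linarith
  set Rz : ℝ := Real.sqrt (Lmax/Lmin) * (‖y0‖ + Cw) + Cw with hRzdef
  have hzΦb : ∀ n, ‖z (φ n)‖ ≤ Rz := by
    intro n
    have h1 : ‖z (φ n)‖ ≤ ‖z (φ n) - wv (φ n)‖ + ‖wv (φ n)‖ := by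
      have e : z (φ n) = (z (φ n) - wv (φ n)) + wv (φ n) := by abel
      calc ‖z (φ n)‖ = ‖(z (φ n) - wv (φ n)) + wv (φ n)‖ := by rw [← e]
        _ ≤ _ := norm_add_le _ _
    have h2 : ‖z (φ n) - wv (φ n)‖ ≤ Real.sqrt (Lmax/Lmin) * (‖y0‖ + Cw) := by
      refine le_trans (hzb (φ n)) ?_
      refine mul_le_mul_of_nonneg_left ?_ (Real.sqrt_nonneg _)
      refine le_trans (norm_sub_le _ _) ?_
      linarith [hw2 n]
    rw [hRzdef]
    linarith [hw2 n]
  -- extract subsequences so that z and lam converge too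
  obtain ⟨zlim, -, σ₁, hσ₁mono, hσ₁tend⟩ :=
    tendsto_subseq_of_bounded
      (Metric.isBounded_closedBall (x := (0 : EuclideanSpace ℝ (Fin p))) (r := Rz))
      (x := fun n => z (φ n))
      (fun n => by simpa [Metric.mem_closedBall, dist_zero_right] using hzΦb n)
  obtain ⟨lamstar, -, σ₂, hσ₂mono, hσ₂tend⟩ :=
    isCompact_Icc.tendsto_subseq (x := fun n => lam (φ (σ₁ n)))
      (fun n => ⟨(hlam _).1.le, (hlam _).2⟩ : ∀ n, lam (φ (σ₁ n)) ∈ Set.Icc (0:ℝ) 1)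
  set ψ : ℕ → ℕ := fun n => φ (σ₁ (σ₂ n)) with hψdef
  have hψmono : StrictMono ψ := hφmono.comp (hσ₁mono.comp hσ₂mono)
  have hψx : Tendsto (fun n => x (ψ n)) atTop (𝓝 xstar) := by
    have := hφtend.comp ((hσ₁mono.comp hσ₂mono).tendsto_atTop)
    simpa [Function.comp_def, hψdef] using this
  have hψz : Tendsto (fun n => z (ψ n)) atTop (𝓝 zlim) := by
    have := hσ₁tend.comp hσ₂mono.tendsto_atTop
    simpa [Function.comp_def, hψdef] using this
  have hψlam : Tendsto (fun n => lam (ψ n)) atTop (𝓝 lamstar) := by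
    simpa [Function.comp_def, hψdef] using hσ₂tend
  have hψg : Tendsto (fun n => gradient f (x (ψ n))) atTop (𝓝 (gradient f xstar)) := by
    have := (hgc.tendsto xstar).comp hψx
    simpa [Function.comp_def] using this
  set Gstar : ℝ := inner ℝ (gradient f xstar) (zlim - xstar) with hGstardef
  have hψG : Tendsto (fun n => G (ψ n)) atTop (𝓝 Gstar) := by
    simp only [hGinner]
    exact hψg.inner (hψz.sub hψx)
  have hψlamG : Tendsto (fun n => lam (ψ n) * G (ψ n)) atTop (𝓝 0) := by
    have := hlamG0.comp hψmono.tendsto_atTop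
    simpa [Function.comp_def] using this
  -- the limiting directional derivative is nonnegative
  have hGstar0 : 0 ≤ Gstar := by
    rcases eq_or_ne lamstar 0 with hl0 | hl0
    · -- stepsizes tend to 0: use the backtracking condition and the MVT
      have hψlam0 : Tendsto (fun n => lam (ψ n)) atTop (𝓝 0) := by rwa [hl0] at hψlam
      have hev : ∀ᶠ n in atTop, lam (ψ n) < 1 := hψlam0.eventually_lt_const one_pos
      have hmvt : ∀ n, lam (ψ n) < 1 → ∃ c, 0 < c ∧ c < lam (ψ n)/γ ∧
          (inner ℝ (gradient f (x (ψ n) + c • (z (ψ n) - x (ψ n)))) (z (ψ n) - x (ψ n)) : ℝ)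
            > β * G (ψ n) := by
        intro n hn
        have hbt := (hbacktrack (ψ n)).resolve_left (ne_of_lt hn)
        rw [hGeq (ψ n)] at hbt
        have hspos : 0 < lam (ψ n)/γ := div_pos (hlam _).1 hγ0
        have hcont : ContinuousOn (fun t : ℝ => f (x (ψ n) + t • (z (ψ n) - x (ψ n))))
            (Set.Icc 0 (lam (ψ n)/γ)) := by
          apply Continuous.continuousOn
          exact hf.continuous.comp (continuous_const.add (continuous_id.smul continuous_const))
        obtain ⟨c, hcmem, hceq⟩ := exists_hasDerivAt_eq_slope
          (fun t : ℝ => f (x (ψ n) + t • (z (ψ n) - x (ψ n))))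
          (fun t => fderiv ℝ f (x (ψ n) + t • (z (ψ n) - x (ψ n))) (z (ψ n) - x (ψ n)))
          hspos hcont (fun t _ => line_deriv hdiff _ _ t)
        refine ⟨c, hcmem.1, hcmem.2, ?_⟩
        have hgradfd : (inner ℝ (gradient f (x (ψ n) + c • (z (ψ n) - x (ψ n))))
            (z (ψ n) - x (ψ n)) : ℝ)
            = fderiv ℝ f (x (ψ n) + c • (z (ψ n) - x (ψ n))) (z (ψ n) - x (ψ n)) := by
          rw [inner_eq_sum]
          exact grad_sum_eq f _ _
        rw [hgradfd, hceq]
        simp only [zero_smul, add_zero, sub_zero]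
        rw [gt_iff_lt, lt_div_iff₀ hspos]
        ring_nf
        ring_nf at hbt
        linarith
      set c : ℕ → ℝ := fun n => if h : lam (ψ n) < 1 then (hmvt n h).choose else 0 with hcdef
      have hcprop : ∀ᶠ n in atTop, 0 < c n ∧ c n < lam (ψ n)/γ ∧
          (inner ℝ (gradient f (x (ψ n) + c n • (z (ψ n) - x (ψ n)))) (z (ψ n) - x (ψ n)) : ℝ)
            > β * G (ψ n) := by
        filter_upwards [hev] with n hn
        simp only [hcdef, dif_pos hn]
        exact (hmvt n hn).choose_spec
      have hsc0 : Tendsto (fun n => lam (ψ n)/γ) atTop (𝓝 0) := by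
        simpa using hψlam0.div_const γ
      have hc0 : Tendsto c atTop (𝓝 0) := by
        refine tendsto_of_tendsto_of_tendsto_of_le_of_le' tendsto_const_nhds hsc0 ?_ ?_
        · filter_upwards [hcprop] with n hn; exact hn.1.le
        · filter_upwards [hcprop] with n hn; exact hn.2.1.le
      have hpt : Tendsto (fun n => x (ψ n) + c n • (z (ψ n) - x (ψ n))) atTop (𝓝 xstar) := by
        have := hψx.add (hc0.smul (hψz.sub hψx))
        simpa using this
      have hgpt : Tendsto (fun n => gradient f (x (ψ n) + c n • (z (ψ n) - x (ψ n)))) atTop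
          (𝓝 (gradient f xstar)) := by
        have := (hgc.tendsto xstar).comp hpt
        simpa [Function.comp_def] using this
      have hinner : Tendsto (fun n =>
          (inner ℝ (gradient f (x (ψ n) + c n • (z (ψ n) - x (ψ n)))) (z (ψ n) - x (ψ n)) : ℝ))
          atTop (𝓝 Gstar) := hgpt.inner (hψz.sub hψx)
      have hge : β * Gstar ≤ Gstar :=
        le_of_tendsto_of_tendsto (hψG.const_mul β) hinner
          (hcprop.mono fun n hn => hn.2.2.le)
      by_contra hcon
      push_neg at hcon
      nlinarith
    · have h0 : lamstar * Gstar = 0 := tendsto_nhds_unique (hψlam.mul hψG) hψlamG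
      rcases mul_eq_zero.1 h0 with h | h
      · exact absurd h hl0
      · rw [h]
  -- therefore the limit of z along ψ is xstar as well
  have hzlim : zlim = xstar := by
    have h1 : Tendsto (fun n => ‖z (ψ n) - x (ψ n)‖^2) atTop (𝓝 (‖zlim - xstar‖^2)) :=
      ((hψz.sub hψx).norm).pow 2
    have h2 : Tendsto (fun n => αmax * Lmax * (-G (ψ n))) atTop
        (𝓝 (αmax * Lmax * (-Gstar))) := (hψG.neg).const_mul _
    have h3 : ‖zlim - xstar‖^2 ≤ αmax * Lmax * (-Gstar) :=
      le_of_tendsto_of_tendsto' h1 h2 (fun n => hkey1 (ψ n))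
    have h4 : αmax * Lmax * (-Gstar) ≤ 0 :=
      mul_nonpos_of_nonneg_of_nonpos (by positivity) (neg_nonpos.2 hGstar0)
    have h5 : ‖zlim - xstar‖^2 = 0 := le_antisymm (h3.trans h4) (sq_nonneg _)
    have h6 : ‖zlim - xstar‖ = 0 := by
      exact pow_eq_zero_iff (two_ne_zero) |>.1 h5
    rw [← sub_eq_zero]
    exact norm_eq_zero.1 h6
  rw [hzlim] at hψz
  -- conclusion via the variational inequality
  intro y hy
  have hgoal : (∑ i, gradient f xstar i * (y i - xstar i))
      = (inner ℝ (gradient f xstar) (y - xstar) : ℝ) := by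
    rw [inner_eq_sum]
    exact Finset.sum_congr rfl fun i _ => by rw [hsub]
  rw [hgoal]
  set Rk : ℕ → ℝ :=
    fun n => ∑ i, (x (ψ n) i - z (ψ n) i) * (y i - z (ψ n) i) / d (ψ n) i with hRkdef
  have hVI2 : ∀ n, - (|Rk n| / αmin) ≤ (inner ℝ (gradient f (x (ψ n))) (y - z (ψ n)) : ℝ) := by
    intro n
    have h := hVI (ψ n) y hy
    have heq : ∀ i : Fin p,
        (z (ψ n) i - (x (ψ n) i - α (ψ n) * d (ψ n) i * gradient f (x (ψ n)) i))
          * (y i - z (ψ n) i) / d (ψ n) i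
        = -((x (ψ n) i - z (ψ n) i) * (y i - z (ψ n) i) / d (ψ n) i)
          + α (ψ n) * (gradient f (x (ψ n)) i * (y i - z (ψ n) i)) := by
      intro i
      have := (hdpos (ψ n) i).ne'
      field_simp
      ring
    rw [Finset.sum_congr rfl (fun i _ => heq i), Finset.sum_add_distrib,
      Finset.sum_neg_distrib, ← Finset.mul_sum] at h
    have hRkeq : (∑ i, (x (ψ n) i - z (ψ n) i) * (y i - z (ψ n) i) / d (ψ n) i) = Rk n := rfl
    rw [hRkeq] at h
    have hPeq : (∑ i, gradient f (x (ψ n)) i * (y i - z (ψ n) i))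
        = (inner ℝ (gradient f (x (ψ n))) (y - z (ψ n)) : ℝ) := by
      rw [inner_eq_sum]
      exact Finset.sum_congr rfl fun i _ => by rw [hsub]
    rw [hPeq] at h
    set P := (inner ℝ (gradient f (x (ψ n))) (y - z (ψ n)) : ℝ) with hPdef
    have hαn : αmin ≤ α (ψ n) := (hα _).1
    have habs : -|Rk n| ≤ Rk n := neg_abs_le _
    rcases le_or_gt 0 P with hP | hP
    · have hpos : (0:ℝ) ≤ |Rk n|/αmin := by positivity
      linarith
    · have h1 : α (ψ n) * (-P) ≤ |Rk n| := by nlinarith [abs_nonneg (Rk n)]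
      have h2 : αmin * (-P) ≤ α (ψ n) * (-P) :=
        mul_le_mul_of_nonneg_right hαn (by linarith)
      rw [neg_le, ← neg_neg P]
      rw [neg_neg]
      show -P ≤ |Rk n| / αmin
      rw [le_div_iff₀ hαmin]
      calc -P * αmin = αmin * (-P) := by ring
        _ ≤ α (ψ n) * (-P) := h2
        _ ≤ |Rk n| := h1
  have hzx0 : Tendsto (fun n => ‖x (ψ n) - z (ψ n)‖) atTop (𝓝 0) := by
    have := (hψx.sub hψz).norm
    simpa using this
  have hRkb : ∀ n, |Rk n| ≤ ((p:ℝ) / Lmin) * (‖x (ψ n) - z (ψ n)‖ * ‖y - z (ψ n)‖) := by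
    intro n
    have h1 : |Rk n| ≤ ∑ i, |(x (ψ n) i - z (ψ n) i) * (y i - z (ψ n) i) / d (ψ n) i| :=
      Finset.abs_sum_le_sum_abs _ _
    have h2 : ∀ i : Fin p, |(x (ψ n) i - z (ψ n) i) * (y i - z (ψ n) i) / d (ψ n) i|
        ≤ ‖x (ψ n) - z (ψ n)‖ * ‖y - z (ψ n)‖ / Lmin := by
      intro i
      rw [abs_div, abs_mul, abs_of_pos (hdpos _ i)]
      have e1 : |x (ψ n) i - z (ψ n) i| ≤ ‖x (ψ n) - z (ψ n)‖ := by
        have := coord_le (x (ψ n) - z (ψ n)) i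
        rwa [hsub] at this
      have e2 : |y i - z (ψ n) i| ≤ ‖y - z (ψ n)‖ := by
        have := coord_le (y - z (ψ n)) i
        rwa [hsub] at this
      have hnum : |x (ψ n) i - z (ψ n) i| * |y i - z (ψ n) i|
          ≤ ‖x (ψ n) - z (ψ n)‖ * ‖y - z (ψ n)‖ :=
        mul_le_mul e1 e2 (abs_nonneg _) (norm_nonneg _)
      exact div_le_div₀ (mul_nonneg (norm_nonneg _) (norm_nonneg _)) hnum hLmin (hd _ i).1
    calc |Rk n| ≤ ∑ i, |(x (ψ n) i - z (ψ n) i) * (y i - z (ψ n) i) / d (ψ n) i| := h1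
      _ ≤ ∑ _i : Fin p, ‖x (ψ n) - z (ψ n)‖ * ‖y - z (ψ n)‖ / Lmin :=
          Finset.sum_le_sum (fun i _ => h2 i)
      _ = (p:ℝ) * (‖x (ψ n) - z (ψ n)‖ * ‖y - z (ψ n)‖ / Lmin) := by
          rw [Finset.sum_const, Finset.card_univ, Fintype.card_fin, nsmul_eq_mul]
      _ = ((p:ℝ) / Lmin) * (‖x (ψ n) - z (ψ n)‖ * ‖y - z (ψ n)‖) := by ring
  have hRk0 : Tendsto (fun n => |Rk n|) atTop (𝓝 0) := by
    have hb : Tendsto (fun n => ((p:ℝ) / Lmin) * (‖x (ψ n) - z (ψ n)‖ * ‖y - z (ψ n)‖))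
        atTop (𝓝 0) := by
      have h1 : Tendsto (fun n => ‖y - z (ψ n)‖) atTop (𝓝 ‖y - xstar‖) :=
        (tendsto_const_nhds.sub hψz).norm
      have := (hzx0.mul h1).const_mul ((p:ℝ)/Lmin)
      simpa using this
    exact tendsto_of_tendsto_of_tendsto_of_le_of_le tendsto_const_nhds hb
      (fun n => abs_nonneg _) hRkb
  have hlhs : Tendsto (fun n => -(|Rk n| / αmin)) atTop (𝓝 0) := by
    have := (hRk0.div_const αmin).neg
    simpa using this
  have hrhs : Tendsto (fun n => (inner ℝ (gradient f (x (ψ n))) (y - z (ψ n)) : ℝ)) atTop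
      (𝓝 (inner ℝ (gradient f xstar) (y - xstar) : ℝ)) :=
    hψg.inner (tendsto_const_nhds.sub hψz)
  exact le_of_tendsto_of_tendsto' hlhs hrhs hVI2
end

section
/- Let p be a positive integer, Ω ⊆ ℝ^p a nonempty closed convex set, x ∈ Ω, g ∈ ℝ^p, α > 0, and d ∈ ℝ^p a vector with d_i > 0 for all i. Let w ∈ ℝ^p be given by w_i = x_i − α d_i g_i, and let z be the point of Ω minimizing y ↦ Σ_i (y_i − w_i)²/d_i over Ω. Then g·(z − x) ≤ −(1/α) Σ_i (z_i − x_i)²/d_i. In particular, if z ≠ x then g·(z − x) < 0, i.e. z − x is a descent direction for any function whose gradient at x is g. -/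
/-- The scaled gradient projection step produces a descent direction. -/
theorem scaled_projection_descent_direction
    (p : ℕ) (hp : 0 < p)
    (Ω : Set (Fin p → ℝ))
    (hΩne : Ω.Nonempty) (hΩclosed : IsClosed Ω) (hΩconv : Convex ℝ Ω)
    (x : Fin p → ℝ) (hx : x ∈ Ω)
    (g : Fin p → ℝ) (α : ℝ) (hα : 0 < α)
    (d : Fin p → ℝ) (hd : ∀ i, 0 < d i)
    (w : Fin p → ℝ) (hw : ∀ i, w i = x i - α * d i * g i)
    (z : Fin p → ℝ) (hzmem : z ∈ Ω)
    (hzmin : ∀ y ∈ Ω, (∑ i, (z i - w i)^2 / d i) ≤ ∑ i, (y i - w i)^2 / d i) :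
    (∑ i, g i * (z i - x i)) ≤ -(1/α) * ∑ i, (z i - x i)^2 / d i ∧
    (z ≠ x → (∑ i, g i * (z i - x i)) < 0) := by
  set A := ∑ i, (x i - z i) * (z i - w i) / d i with hA_def
  set B := ∑ i, (z i - x i)^2 / d i with hB_def
  have hB : 0 ≤ B := Finset.sum_nonneg fun i _ =>
    div_nonneg (sq_nonneg _) (hd i).le
  have key : ∀ t : ℝ, 0 ≤ t → t ≤ 1 → 0 ≤ 2*t*A + t^2*B := by
    intro t ht ht1
    have hy : (fun i => (1-t) * z i + t * x i) ∈ Ω := by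
      have := hΩconv hzmem hx (by linarith : (0:ℝ) ≤ 1 - t) ht (by ring)
      exact this
    have hmin := hzmin _ hy
    have expand : ∑ i, ((1-t) * z i + t * x i - w i)^2 / d i
        = (∑ i, (z i - w i)^2 / d i) + (2*t*A + t^2*B) := by
      rw [hA_def, hB_def, Finset.mul_sum, Finset.mul_sum,
        ← Finset.sum_add_distrib, ← Finset.sum_add_distrib]
      apply Finset.sum_congr rfl
      intro i _
      have hdne := (hd i).ne'
      field_simp
      ring
    rw [expand] at hmin
    linarith
  have hA : 0 ≤ A := by
    by_contra h
    push_neg at h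
    rcases eq_or_lt_of_le hB with hB0 | hBpos
    · have := key 1 zero_le_one le_rfl
      rw [← hB0] at this; linarith
    · set t := min 1 (-A/B) with ht_def
      have ht0 : 0 < t := lt_min one_pos (div_pos (neg_pos.2 h) hBpos)
      have ht1 : t ≤ 1 := min_le_left _ _
      have htB : t * B ≤ -A := by
        have h2 : t ≤ -A/B := min_le_right _ _
        calc t * B ≤ (-A/B) * B := by nlinarith
        _ = -A := by field_simp
      have := key t ht0.le ht1
      nlinarith
  have hAval : A + B + α * ∑ i, g i * (z i - x i) = 0 := by
    rw [hA_def, hB_def, Finset.mul_sum, ← Finset.sum_add_distrib,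
      ← Finset.sum_add_distrib]
    apply Finset.sum_eq_zero
    intro i _
    have hdne := (hd i).ne'
    rw [hw i]
    field_simp
    ring
  have hinv : α * (1/α) = 1 := by field_simp
  have main : (∑ i, g i * (z i - x i)) ≤ -(1/α) * B := by
    have h1 : α * (∑ i, g i * (z i - x i)) + B ≤ 0 := by linarith
    nlinarith [h1, hα, hinv]
  refine ⟨main, fun hne => ?_⟩
  have hBpos : 0 < B := by
    obtain ⟨i, hi⟩ : ∃ i, z i ≠ x i := by
      by_contra hc
      push_neg at hc
      exact hne (funext hc)
    have hne0 : z i - x i ≠ 0 := sub_ne_zero.mpr hi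
    have : 0 < (z i - x i)^2 / d i :=
      div_pos (by positivity) (hd i)
    exact Finset.sum_pos' (fun j _ => div_nonneg (sq_nonneg _) (hd j).le)
      ⟨i, Finset.mem_univ i, this⟩
  have : -(1/α) * B < 0 := by
    have : 0 < (1/α) * B := mul_pos (by positivity) hBpos
    linarith
  linarith
end
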